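/- arXiv:2604.12045 — 2 statements merged into one kernel-verified Lean document; each statement's English description precedes it below -/
import Mathlib

section
/- Let f : ℝ^{n_x} × ℝ^{n_y} → ℝ satisfy the two-sided PL condition with constants μ₁, μ₂ > 0 and be continuously differentiable. Then for all (x, y): ‖∇_x f(x, y)‖ ≥ μ₁ · d(x, BR_x(y)), where BR_x(y) = argmin_x f(x, y) (assumed non-empty). -/
open Filter Topology

lemma ekeland_aux {E : Type*} [NormedAddCommGroup E] [CompleteSpace E]
    (g : E → ℝ) (hg : Continuous g) (hg0 : ∀ z, 0 ≤ g z) (σ : ℝ) (hσ : 0 < σ) (x₀ : E) :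
    ∃ xh : E, g xh + σ * ‖xh - x₀‖ ≤ g x₀ ∧ ∀ z, g xh ≤ g z + σ * ‖z - xh‖ := by
  set F : E → Set E := fun u => {z | g z + σ * ‖z - u‖ ≤ g u} with hF
  have hself : ∀ u, u ∈ F u := by intro u; simp [hF]
  have htrans : ∀ u z w, z ∈ F u → w ∈ F z → w ∈ F u := by
    intro u z w hz hw
    simp only [hF, Set.mem_setOf_eq] at *
    have htri : ‖w - u‖ ≤ ‖w - z‖ + ‖z - u‖ := by
      have := dist_triangle w z u
      simpa [dist_eq_norm] using this
    nlinarith [mul_le_mul_of_nonneg_left htri hσ.le]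
  have hne : ∀ u, (g '' F u).Nonempty := fun u => ⟨g u, u, hself u, rfl⟩
  have hbdd : ∀ u, BddBelow (g '' F u) := by
    intro u; exact ⟨0, by rintro a ⟨w, -, rfl⟩; exact hg0 w⟩
  have hstep : ∀ (n : ℕ) (u : E), ∃ z, z ∈ F u ∧ g z < sInf (g '' F u) + (1/2)^n := by
    intro n u
    obtain ⟨a, ⟨z, hz, rfl⟩, ha⟩ := exists_lt_of_csInf_lt (hne u)
      (lt_add_of_pos_right _ (pow_pos (by norm_num) n : (0:ℝ) < (1/2)^n))
    exact ⟨z, hz, ha⟩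
  choose next hnext hnextlt using hstep
  set seq : ℕ → E := fun n => Nat.rec x₀ (fun n u => next n u) n with hseq
  have hseq0 : seq 0 = x₀ := rfl
  have hseqS : ∀ n, seq (n+1) = next n (seq n) := fun n => rfl
  have hmem : ∀ n, seq (n+1) ∈ F (seq n) := fun n => hnext n (seq n)
  have hmono : ∀ n m, n ≤ m → seq m ∈ F (seq n) := by
    intro n m hnm
    induction m with
    | zero => simpa [Nat.le_zero.mp hnm] using hself (seq 0)
    | succ k ih =>
      rcases Nat.lt_or_ge n (k+1) with h | h
      · exact htrans _ _ _ (ih (Nat.lt_succ_iff.mp h)) (hmem k)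
      · have : n = k + 1 := le_antisymm hnm h
        subst this; exact hself _
  have hstepnorm : ∀ n, σ * ‖seq (n+1) - seq n‖ ≤ g (seq n) - g (seq (n+1)) := by
    intro n; have := hmem n; simp only [hF, Set.mem_setOf_eq] at this; linarith
  have hsum : ∀ n, ∑ i ∈ Finset.range n, dist (seq i) (seq (i+1)) ≤ g x₀ / σ := by
    intro n
    have key : ∀ n, σ * ∑ i ∈ Finset.range n, dist (seq i) (seq (i+1))
        ≤ g x₀ - g (seq n) := by
      intro n
      induction n with
      | zero => simp [hseq0]
      | succ k ih =>
        rw [Finset.sum_range_succ, mul_add]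
        have h2 := hstepnorm k
        have : dist (seq k) (seq (k+1)) = ‖seq (k+1) - seq k‖ := by
          rw [dist_comm, dist_eq_norm]
        rw [this]; linarith
    have h1 := key n
    have h2 := hg0 (seq n)
    rw [le_div_iff₀ hσ]
    nlinarith
  have hcauchy : CauchySeq seq := by
    apply cauchySeq_of_summable_dist
    exact summable_of_sum_range_le (fun n => dist_nonneg) hsum
  obtain ⟨xh, hlim⟩ := cauchySeq_tendsto_of_complete hcauchy
  have hxhF : ∀ n, xh ∈ F (seq n) := by
    intro n
    have htend : Tendsto (fun m => g (seq m) + σ * ‖seq m - seq n‖) atTop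
        (𝓝 (g xh + σ * ‖xh - seq n‖)) := by
      apply Tendsto.add
      · exact (hg.tendsto xh).comp hlim
      · exact (tendsto_const_nhds.mul (((continuous_id.sub continuous_const).norm.tendsto xh).comp hlim))
    refine le_of_tendsto htend ?_
    filter_upwards [eventually_ge_atTop n] with m hm
    exact hmono n m hm
  have ghxh_le : ∀ n, g xh ≤ g (seq n) := by
    intro n
    have := hxhF n
    simp only [hF, Set.mem_setOf_eq] at this
    nlinarith [norm_nonneg (xh - seq n)]
  refine ⟨xh, by simpa [hseq0, hF] using hxhF 0, ?_⟩
  intro z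
  by_contra hcon
  push_neg at hcon
  have hzxh : z ∈ F xh := le_of_lt hcon
  have hzF : ∀ n, z ∈ F (seq n) := fun n => htrans _ _ _ (hxhF n) hzxh
  have hgz : ∀ n, g xh ≤ g z + (1/2)^n := by
    intro n
    have h1 : sInf (g '' F (seq n)) ≤ g z := csInf_le (hbdd _) ⟨z, hzF n, rfl⟩
    have h2 := hnextlt n (seq n)
    have h3 := ghxh_le (n+1)
    rw [hseqS n] at h3
    linarith
  have hle : g xh ≤ g z := by
    refine le_of_forall_pos_le_add ?_
    intro ε hε
    obtain ⟨n, hn⟩ := exists_pow_lt_of_lt_one hε (by norm_num : (1:ℝ)/2 < 1)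
    exact le_trans (hgz n) (by linarith)
  nlinarith [norm_nonneg (z - xh), mul_nonneg hσ.le (norm_nonneg (z - xh))]


set_option maxHeartbeats 1000000 in
/-- The two-sided PL condition implies the global error bound
`‖∇ₓ f(x,y)‖ ≥ μ₁ · d(x, BRₓ(y))`. -/
theorem twoSidedPL_error_bound {nx ny : ℕ}
    (f : EuclideanSpace ℝ (Fin nx) → EuclideanSpace ℝ (Fin ny) → ℝ)
    (hf : ContDiff ℝ 1 (fun p : EuclideanSpace ℝ (Fin nx) × EuclideanSpace ℝ (Fin ny) =>
      f p.1 p.2))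
    (μ₁ μ₂ : ℝ) (hμ₁ : 0 < μ₁) (hμ₂ : 0 < μ₂)
    (hPLx : ∀ x y, 2 * μ₁ * (f x y - ⨅ x', f x' y) ≤ ‖fderiv ℝ (fun x' => f x' y) x‖ ^ 2)
    (hPLy : ∀ x y, 2 * μ₂ * ((⨆ y', f x y') - f x y) ≤ ‖fderiv ℝ (fun y' => f x y') y‖ ^ 2)
    (hBRne : ∀ y, {x | ∀ a, f x y ≤ f a y}.Nonempty) :
    ∀ x y, μ₁ * Metric.infDist x {x' | ∀ a, f x' y ≤ f a y} ≤
      ‖fderiv ℝ (fun x' => f x' y) x‖ := by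
  intro x y
  set S : Set (EuclideanSpace ℝ (Fin nx)) := {x' | ∀ a, f x' y ≤ f a y} with hS
  obtain ⟨xs, hxs⟩ := hBRne y
  -- the infimum equals the minimum value
  have hbdd : BddBelow (Set.range fun x' => f x' y) := ⟨f xs y, by rintro a ⟨w, rfl⟩; exact hxs w⟩
  have hm : (⨅ x', f x' y) = f xs y := by
    apply le_antisymm (ciInf_le hbdd xs) (le_ciInf hxs)
  set m : ℝ := f xs y with hmdef
  have hmle : ∀ z, m ≤ f z y := hxs
  -- continuity / differentiability of f(·, y)
  have hfc1 : ContDiff ℝ 1 (fun x' => f x' y) :=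
    hf.comp (contDiff_id.prodMk contDiff_const)
  have hdiff : Differentiable ℝ (fun x' => f x' y) := hfc1.differentiable one_ne_zero
  have hcont : Continuous (fun x' => f x' y) := hfc1.continuous
  -- the auxiliary function g = sqrt (f ⬝ y - m)
  set g : EuclideanSpace ℝ (Fin nx) → ℝ := fun z => Real.sqrt (f z y - m) with hg
  have hgc : Continuous g := Real.continuous_sqrt.comp (hcont.sub continuous_const)
  have hg0 : ∀ z, 0 ≤ g z := fun z => Real.sqrt_nonneg _
  have hgsq : ∀ z, (g z) ^ 2 = f z y - m := fun z => Real.sq_sqrt (by linarith [hmle z])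
  have hgS : ∀ z, g z = 0 → z ∈ S := by
    intro z hz
    have : f z y - m = 0 := by
      have := hgsq z; rw [hz] at this; simpa using this.symm
    intro a
    have : f z y = m := by linarith
    rw [this]; exact hmle a
  -- PL inequality with m
  have hPL : ∀ z, 2 * μ₁ * (g z) ^ 2 ≤ ‖fderiv ℝ (fun x' => f x' y) z‖ ^ 2 := by
    intro z
    have := hPLx z y
    rw [hm] at this
    rw [hgsq z]
    exact this
  by_contra hcon
  push_neg at hcon
  set N : ℝ := ‖fderiv ℝ (fun x' => f x' y) x‖ with hN
  set d : ℝ := Metric.infDist x S with hd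
  have hN0 : 0 ≤ N := norm_nonneg _
  have hd0 : 0 < d := by
    rcases lt_or_ge 0 d with h | h
    · exact h
    · exfalso; nlinarith [Metric.infDist_nonneg (x := x) (s := S)]
  set s : ℝ := Real.sqrt (μ₁ / 2) with hs
  have hs0 : 0 < s := Real.sqrt_pos.mpr (by linarith)
  have hssq : s ^ 2 = μ₁ / 2 := Real.sq_sqrt (by linarith)
  -- g x < s * d
  have hgxd : g x < s * d := by
    have h1 := hPL x
    rw [← hN] at h1
    have hNsq : N ^ 2 < μ₁ ^ 2 * d ^ 2 := by nlinarith
    have h3 : (g x) ^ 2 < s ^ 2 * d ^ 2 := by rw [hssq]; nlinarith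
    nlinarith [hg0 x, mul_pos hs0 hd0]
  -- choose σ
  obtain ⟨σ, hσ1, hσ2⟩ := exists_between ((div_lt_iff₀ hd0).mpr hgxd : g x / d < s)
  have hσ0 : 0 < σ := lt_of_le_of_lt (div_nonneg (hg0 x) hd0.le) hσ1
  obtain ⟨xh, hxh1, hxh2⟩ := ekeland_aux g hgc hg0 σ hσ0 x
  -- ‖xh - x‖ < d, so xh ∉ S
  have hdist : ‖xh - x‖ < d := by
    have h1 : σ * ‖xh - x‖ ≤ g x := by nlinarith [hg0 xh]
    have h2 : g x < σ * d := by
      rw [div_lt_iff₀ hd0] at hσ1; linarith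
    nlinarith
  have hxhS : xh ∉ S := by
    intro hmem
    have : d ≤ dist x xh := Metric.infDist_le_dist_of_mem hmem
    rw [dist_eq_norm, norm_sub_rev] at this
    linarith
  have hgxh : 0 < g xh := by
    rcases (hg0 xh).lt_or_eq with h | h
    · exact h
    · exact absurd (hgS xh h.symm) hxhS
  -- gradient bound at xh
  set L := fderiv ℝ (fun x' => f x' y) xh with hL
  have hLv : ∀ v : EuclideanSpace ℝ (Fin nx), -(2 * σ * g xh * ‖v‖) ≤ L v := by
    intro v
    have hFd : HasFDerivAt (fun x' => f x' y) L xh := (hdiff xh).hasFDerivAt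
    have hline : HasDerivAt (fun t : ℝ => xh + t • v) v 0 := by
      simpa using ((hasDerivAt_id (0:ℝ)).smul_const v).const_add xh
    have hφ : HasDerivAt (fun t : ℝ => f (xh + t • v) y) (L v) 0 := by
      have hFd' : HasFDerivAt (fun x' => f x' y) L (xh + (0:ℝ) • v) := by
        simpa using hFd
      have := hFd'.comp_hasDerivAt 0 hline
      exact this
    rw [hasDerivAt_iff_tendsto_slope] at hφ
    have hφ' : Tendsto (slope (fun t : ℝ => f (xh + t • v) y) 0) (𝓝[>] 0) (𝓝 (L v)) :=
      hφ.mono_left (nhdsWithin_mono 0 (fun t ht => ne_of_gt ht))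
    refine ge_of_tendsto hφ' ?_
    have hδ : (0:ℝ) < g xh / (σ * (‖v‖ + 1)) := by positivity
    filter_upwards [Ioo_mem_nhdsGT_of_mem ⟨le_refl (0:ℝ), hδ⟩] with t ht
    obtain ⟨ht0, htδ⟩ := ht
    -- key: f (xh + t•v) y - f xh y ≥ -2σ g xh t ‖v‖
    have hsmall : σ * (t * ‖v‖) ≤ g xh := by
      have h1 : t * (σ * (‖v‖ + 1)) < g xh := by
        rw [lt_div_iff₀ (by positivity)] at htδ; linarith
      nlinarith [norm_nonneg v, hσ0]
    have hek := hxh2 (xh + t • v)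
    have hnrm : ‖xh + t • v - xh‖ = t * ‖v‖ := by
      simp [norm_smul, abs_of_pos ht0]
    rw [hnrm] at hek
    have hgz0 : 0 ≤ g xh - σ * (t * ‖v‖) := by linarith
    have hsq : (g xh - σ * (t * ‖v‖)) ^ 2 ≤ f (xh + t • v) y - m := by
      rw [← hgsq (xh + t • v)]
      have h2 : g xh - σ * (t * ‖v‖) ≤ g (xh + t • v) := by linarith
      exact pow_le_pow_left₀ hgz0 h2 2
    have hkey : -(2 * σ * g xh * ‖v‖) * t ≤ f (xh + t • v) y - f xh y := by
      have hx0 : (g xh) ^ 2 = f xh y - m := hgsq xh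
      have hexp : (g xh - σ * (t * ‖v‖)) ^ 2
          = (g xh) ^ 2 - (2 * σ * g xh * ‖v‖) * t + (σ * (t * ‖v‖)) ^ 2 := by ring
      have hC : 0 ≤ (σ * (t * ‖v‖)) ^ 2 := sq_nonneg _
      linarith [hsq]
    have hslope : slope (fun t : ℝ => f (xh + t • v) y) 0 t
        = (f (xh + t • v) y - f xh y) / t := by
      simp [slope_def_field]
    rw [hslope, le_div_iff₀ ht0]
    linarith
  have hLnorm : ‖L‖ ≤ 2 * σ * g xh := by
    apply ContinuousLinearMap.opNorm_le_bound L (by positivity)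
    intro v
    rw [Real.norm_eq_abs, abs_le]
    constructor
    · have := hLv v; linarith
    · have := hLv (-v)
      rw [map_neg, norm_neg] at this
      linarith
  have hPLh := hPL xh
  rw [← hL] at hPLh
  have hLn0 : 0 ≤ ‖L‖ := norm_nonneg _
  have h1 : ‖L‖ ^ 2 ≤ 4 * σ ^ 2 * (g xh) ^ 2 := by nlinarith [mul_nonneg (mul_nonneg (by norm_num : (0:ℝ) ≤ 2) hσ0.le) hgxh.le]
  have h2 : σ ^ 2 * (g xh) ^ 2 < μ₁ / 2 * (g xh) ^ 2 := by
    have hss : σ ^ 2 < s ^ 2 := by nlinarith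
    rw [← hssq]
    exact mul_lt_mul_of_pos_right hss (pow_pos hgxh 2)
  linarith [hPLh]
end

section
/- Let f : ℝⁿ → ℝ be differentiable. If f satisfies the α-PL condition locally on a neighborhood N^{PL} of the minimizer set P and f is invex, then there exists a smaller neighborhood N^G ⊆ N^{PL} of P such that the gradient-flow trajectory of g(x) = (f(x) − min f)^{(α−1)/α} starting from any x ∈ N^G stays in N^{PL} and reaches P in finite time T ≤ g(x) (α/(α−1))² μ^{−2/α}. -/
open Set Metric Filter


/-- For an invex function satisfying the α-PL condition locally near its minimizer set
`P`, there is a smaller neighborhood `N^G` of `P` such that the gradient-flow trajectory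
of `g = (f − min f)^((α−1)/α)` starting in `N^G` stays in `N^{PL}` and reaches `P` in
finite time `T ≤ g(x₀) (α/(α−1))² μ^{−2/α}`. -/
theorem gradient_flow_reaches_minimizers {n : ℕ}
    (f : EuclideanSpace ℝ (Fin n) → ℝ) (fstar : ℝ) (α μ : ℝ)
    (hf : Differentiable ℝ f)
    (hα : 1 < α) (hμ : 0 < μ)
    (hmin : ∀ x, fstar ≤ f x)
    (hinvex : ∀ x, fderiv ℝ f x = 0 → ∀ y, f x ≤ f y)
    (NPL : Set (EuclideanSpace ℝ (Fin n)))
    (hNPLopen : IsOpen NPL)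
    (hPsub : {x | f x = fstar} ⊆ NPL)
    (hPL : ∀ x ∈ NPL, μ * (f x - fstar) ≤ ‖fderiv ℝ f x‖ ^ α)
    (g : EuclideanSpace ℝ (Fin n) → ℝ)
    (hg : g = fun x => (f x - fstar) ^ ((α - 1) / α)) :
    ∃ NG : Set (EuclideanSpace ℝ (Fin n)), IsOpen NG ∧
      {x | f x = fstar} ⊆ NG ∧ NG ⊆ NPL ∧
      ∀ x0 ∈ NG, ∀ x : ℝ → EuclideanSpace ℝ (Fin n), x 0 = x0 →
        (∀ t : ℝ, 0 ≤ t → HasDerivAt x (-(gradient g (x t))) t) →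
        (∀ t : ℝ, 0 ≤ t → x t ∈ NPL) ∧
        ∃ T : ℝ, 0 ≤ T ∧ T ≤ g x0 * (α / (α - 1)) ^ 2 * μ ^ (-(2 / α)) ∧
          f (x T) = fstar := by
  have hα0 : (0:ℝ) < α := lt_trans one_pos hα
  set β : ℝ := (α - 1) / α with hβdef
  have hβpos : 0 < β := div_pos (by linarith) hα0
  have hβne : β ≠ 0 := ne_of_gt hβpos
  set c : ℝ := β * μ ^ (1/α) with hcdef
  have hμα : (0:ℝ) < μ ^ (1/α) := Real.rpow_pos_of_pos hμ _
  have hcpos : 0 < c := mul_pos hβpos hμα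
  have hsub : ∀ y, 0 ≤ f y - fstar := fun y => sub_nonneg.2 (hmin y)
  have hgnn : ∀ y, 0 ≤ g y := by intro y; rw [hg]; exact Real.rpow_nonneg (hsub y) _
  have hgcont : Continuous g := by
    rw [hg]; exact (hf.continuous.sub continuous_const).rpow_const (fun y => Or.inr hβpos.le)
  have hgzero : ∀ y, g y = 0 ↔ f y = fstar := by
    intro y; rw [hg]
    simpa [Real.rpow_eq_zero (hsub y) hβne] using sub_eq_zero (a := f y) (b := fstar)
  have hgpos : ∀ y, 0 < g y ↔ fstar < f y := by
    intro y
    constructor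
    · intro hp
      rcases (hmin y).lt_or_eq with h | h
      · exact h
      · exact absurd ((hgzero y).2 h.symm) (ne_of_gt hp)
    · intro hp
      exact lt_of_le_of_ne (hgnn y) (fun h => (ne_of_gt hp) ((hgzero y).1 h.symm))
  -- derivative of g
  have hgderiv : ∀ y, fstar < f y →
      HasFDerivAt g ((β * (f y - fstar) ^ (β - 1)) • fderiv ℝ f y) y := by
    intro y hy
    have h1 : HasFDerivAt (fun z => f z - fstar) (fderiv ℝ f y) y := (hf y).hasFDerivAt.sub_const _
    rw [hg]
    exact h1.rpow_const (Or.inl (by simpa [sub_eq_zero] using ne_of_gt hy))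
  -- gradient facts
  have hgradnorm : ∀ y, ‖gradient g y‖ = ‖fderiv ℝ g y‖ := fun y =>
    LinearIsometryEquiv.norm_map (InnerProductSpace.toDual ℝ _).symm (fderiv ℝ g y)
  have hkey : ∀ y, fderiv ℝ g y (-(gradient g y)) = -‖gradient g y‖^2 := by
    intro y
    have h1 : (inner ℝ (gradient g y) (-(gradient g y)) : ℝ) = fderiv ℝ g y (-(gradient g y)) :=
      InnerProductSpace.toDual_symm_apply
    rw [← h1, inner_neg_right, real_inner_self_eq_norm_sq]
  have hgradlb : ∀ y ∈ NPL, fstar < f y → c ≤ ‖gradient g y‖ := by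
    intro y hyN hy
    have hu : 0 < f y - fstar := by linarith
    have hA : (μ * (f y - fstar)) ^ (1/α) ≤ ‖fderiv ℝ f y‖ := by
      have h1 : (μ * (f y - fstar)) ^ (1/α) ≤ (‖fderiv ℝ f y‖ ^ α) ^ (1/α) :=
        Real.rpow_le_rpow (by positivity) (hPL y hyN) (by positivity)
      rwa [← Real.rpow_mul (norm_nonneg _), mul_one_div_cancel (ne_of_gt hα0),
        Real.rpow_one] at h1
    have hnormg : ‖gradient g y‖ = β * (f y - fstar) ^ (β - 1) * ‖fderiv ℝ f y‖ := by
      rw [hgradnorm y, (hgderiv y hy).fderiv, norm_smul, Real.norm_eq_abs,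
        abs_of_pos (by positivity)]
    rw [hnormg]
    have h2 : β * (f y - fstar) ^ (β - 1) * ((μ * (f y - fstar)) ^ (1/α)) ≤
        β * (f y - fstar) ^ (β - 1) * ‖fderiv ℝ f y‖ :=
      mul_le_mul_of_nonneg_left hA (by positivity)
    refine le_trans (le_of_eq ?_) h2
    rw [Real.mul_rpow hμ.le hu.le]
    rw [show β * (f y - fstar) ^ (β - 1) * (μ ^ (1/α) * (f y - fstar) ^ (1/α))
        = β * μ ^ (1/α) * ((f y - fstar) ^ (β - 1) * (f y - fstar) ^ (1/α)) by ring,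
      ← Real.rpow_add hu]
    have he : β - 1 + 1/α = 0 := by rw [hβdef]; field_simp; ring
    rw [he, Real.rpow_zero, mul_one, hcdef]
  have grad_zero : ∀ y, g y = 0 → gradient g y = 0 := by
    intro y hy
    have hloc : IsLocalMin g y := Filter.Eventually.of_forall (fun z => hy ▸ hgnn z)
    have h2 := hloc.fderiv_eq_zero
    simp [gradient, h2]
  -- trajectory lemmas
  have hxcont : ∀ (x : ℝ → EuclideanSpace ℝ (Fin n)),
      (∀ t, 0 ≤ t → HasDerivAt x (-(gradient g (x t))) t) →
      ∀ a b : ℝ, 0 ≤ a → ContinuousOn x (Icc a b) := by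
    intro x hode a b ha s hs
    exact ((hode s (le_trans ha hs.1)).continuousAt).continuousWithinAt
  have traj_deriv : ∀ (x : ℝ → EuclideanSpace ℝ (Fin n)),
      (∀ t, 0 ≤ t → HasDerivAt x (-(gradient g (x t))) t) →
      ∀ t, 0 ≤ t → fstar < f (x t) →
      HasDerivAt (fun s => g (x s)) (-‖gradient g (x t)‖^2) t := by
    intro x hode t ht hft
    have h1 := (hgderiv (x t) hft).comp_hasDerivAt t (hode t ht)
    have h2 : ((β * (f (x t) - fstar) ^ (β - 1)) • fderiv ℝ f (x t)) = fderiv ℝ g (x t) :=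
      ((hgderiv (x t) hft).fderiv).symm
    rwa [h2, hkey] at h1
  have traj_mono : ∀ (x : ℝ → EuclideanSpace ℝ (Fin n)),
      (∀ t, 0 ≤ t → HasDerivAt x (-(gradient g (x t))) t) →
      ∀ s t, 0 ≤ s → s ≤ t → g (x t) ≤ g (x s) := by
    intro x hode s t hs hst
    rcases hst.lt_or_eq with hlt | rfl
    swap
    · exact le_refl _
    by_contra hcon
    push_neg at hcon
    set m : ℝ := (g (x s) + g (x t)) / 2 with hm
    have hm1 : g (x s) < m := by rw [hm]; linarith
    have hm2 : m < g (x t) := by rw [hm]; linarith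
    have hmpos : 0 < m := lt_of_le_of_lt (hgnn (x s)) hm1
    set K : Set ℝ := Icc s t ∩ (fun r => g (x r)) ⁻¹' Iic m with hK
    have hKc : IsClosed K :=
      (hgcont.comp_continuousOn (hxcont x hode s t hs)).preimage_isClosed_of_isClosed
        isClosed_Icc isClosed_Iic
    have hKne : K.Nonempty := ⟨s, ⟨le_refl s, hlt.le⟩, hm1.le⟩
    have hKbdd : BddAbove K := ⟨t, fun r hr => hr.1.2⟩
    set u : ℝ := sSup K with hu
    have huK : u ∈ K := hKc.csSup_mem hKne hKbdd
    have hus : s ≤ u := huK.1.1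
    have hut : u ≤ t := huK.1.2
    have hult : u < t := lt_of_le_of_ne hut (fun h => absurd (h ▸ huK.2) (not_le.2 hm2))
    have habove : ∀ r, u < r → r ≤ t → m < g (x r) := by
      intro r hur hrt
      by_contra hn
      push_neg at hn
      exact absurd (le_csSup hKbdd ⟨⟨le_trans hus hur.le, hrt⟩, hn⟩) (not_le.2 hur)
    have hanti : AntitoneOn (fun r => g (x r)) (Icc u t) := by
      apply antitoneOn_of_deriv_nonpos (f := fun r => g (x r)) (convex_Icc u t)
      · exact hgcont.comp_continuousOn (hxcont x hode u t (le_trans hs hus))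
      · rw [interior_Icc]
        intro r hr
        have hfr : fstar < f (x r) := (hgpos _).1 (lt_trans hmpos (habove r hr.1 hr.2.le))
        exact ((traj_deriv x hode r (le_trans hs (le_trans hus hr.1.le)) hfr).differentiableAt).differentiableWithinAt
      · rw [interior_Icc]
        intro r hr
        have hfr : fstar < f (x r) := (hgpos _).1 (lt_trans hmpos (habove r hr.1 hr.2.le))
        rw [(traj_deriv x hode r (le_trans hs (le_trans hus hr.1.le)) hfr).deriv]
        simp [neg_nonpos]
    have h3 : g (x t) ≤ g (x u) :=
      hanti (left_mem_Icc.2 hut) (right_mem_Icc.2 hut) hut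
    have h4 : g (x u) ≤ m := huK.2
    linarith
  -- fencing: distance bound while g positive
  have fence : ∀ (x : ℝ → EuclideanSpace ℝ (Fin n)),
      (∀ t, 0 ≤ t → HasDerivAt x (-(gradient g (x t))) t) →
      ∀ b, 0 ≤ b → (∀ s ∈ Ico 0 b, x s ∈ NPL ∧ fstar < f (x s)) →
      ∀ s ∈ Icc 0 b, ‖x s - x 0‖ ≤ (g (x 0) - g (x s)) / c := by
    intro x hode b hb hpos
    have hBcont : ContinuousOn (fun s => (g (x 0) - g (x s)) / c) (Icc 0 b) :=
      (continuousOn_const.sub (hgcont.comp_continuousOn (hxcont x hode 0 b le_rfl))).div_const c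
    have hBderiv : ∀ s ∈ Ico 0 b,
        HasDerivWithinAt (fun r => (g (x 0) - g (x r)) / c)
          (‖gradient g (x s)‖^2 / c) (Ici s) s := by
      intro s hs
      have h1 := ((hasDerivAt_const s (g (x 0))).sub
        (traj_deriv x hode s hs.1 (hpos s hs).2)).div_const c
      simpa using h1.hasDerivWithinAt
    have hbound : ∀ s ∈ Ico 0 b, ‖-(gradient g (x s))‖ ≤ ‖gradient g (x s)‖^2 / c := by
      intro s hs
      rw [norm_neg]
      have hlb : c ≤ ‖gradient g (x s)‖ := hgradlb _ (hpos s hs).1 (hpos s hs).2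
      rw [le_div_iff₀ hcpos]
      nlinarith [norm_nonneg (gradient g (x s))]
    have := image_norm_le_of_norm_deriv_right_le_deriv_boundary'
      (f := fun s => x s - x 0) (f' := fun s => -(gradient g (x s)))
      (fun s hs => (((hode s hs.1).continuousAt).sub continuousAt_const).continuousWithinAt)
      (fun s hs => ((hode s hs.1).sub_const (x 0)).hasDerivWithinAt)
      (by simp) hBcont hBderiv hbound
    exact fun s hs => this hs
  -- distance bound in general (while in NPL)
  have traj_dist : ∀ (x : ℝ → EuclideanSpace ℝ (Fin n)),
      (∀ t, 0 ≤ t → HasDerivAt x (-(gradient g (x t))) t) →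
      ∀ t, 0 ≤ t → (∀ s ∈ Icc 0 t, x s ∈ NPL) →
      ∀ s ∈ Icc 0 t, ‖x s - x 0‖ ≤ g (x 0) / c := by
    intro x hode t ht hNP
    have hfin : ∀ b, 0 ≤ b → b ≤ t → (∀ r ∈ Ico 0 b, fstar < f (x r)) →
        ∀ s ∈ Icc 0 b, ‖x s - x 0‖ ≤ g (x 0) / c := by
      intro b hb hbt hfb s hs
      have h1 := fence x hode b hb
        (fun r hr => ⟨hNP r ⟨hr.1, hr.2.le.trans hbt⟩, hfb r hr⟩) s hs
      refine le_trans h1 ?_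
      have := hgnn (x s)
      exact (div_le_div_iff_of_pos_right hcpos).2 (by linarith)
    by_cases hz : ∃ r ∈ Icc 0 t, g (x r) = 0
    · set K : Set ℝ := Icc 0 t ∩ (fun r => g (x r)) ⁻¹' {0} with hK
      have hKc : IsClosed K :=
        (hgcont.comp_continuousOn (hxcont x hode 0 t le_rfl)).preimage_isClosed_of_isClosed
          isClosed_Icc isClosed_singleton
      have hKne : K.Nonempty := by obtain ⟨r, hr1, hr2⟩ := hz; exact ⟨r, hr1, hr2⟩
      have hKbdd : BddBelow K := ⟨0, fun r hr => hr.1.1⟩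
      have hTK : sInf K ∈ K := hKc.csInf_mem hKne hKbdd
      set T0 : ℝ := sInf K with hT0
      have hT00 : 0 ≤ T0 := hTK.1.1
      have hT0t : T0 ≤ t := hTK.1.2
      have hT0z : g (x T0) = 0 := hTK.2
      have hposlt : ∀ r ∈ Ico 0 T0, fstar < f (x r) := by
        intro r hr
        rw [← hgpos]
        rcases (hgnn (x r)).lt_or_eq with h | h
        · exact h
        · exact absurd (csInf_le hKbdd ⟨⟨hr.1, hr.2.le.trans hT0t⟩, h.symm⟩) (not_le.2 hr.2)
      have hconst : ∀ s ∈ Icc T0 t, x s = x T0 := by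
        intro s hs
        refine constant_of_has_deriv_right_zero (hxcont x hode T0 t hT00) ?_ s hs
        intro r hr
        have hgr : g (x r) = 0 := le_antisymm
          (hT0z ▸ traj_mono x hode T0 r hT00 hr.1) (hgnn (x r))
        have h2 := hode r (le_trans hT00 hr.1)
        rw [grad_zero _ hgr] at h2
        simpa using h2.hasDerivWithinAt
      intro s hs
      rcases le_total s T0 with h | h
      · exact hfin T0 hT00 hT0t hposlt s ⟨hs.1, h⟩
      · rw [hconst s ⟨h, hs.2⟩]
        exact hfin T0 hT00 hT0t hposlt T0 ⟨hT00, le_refl T0⟩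
    · push_neg at hz
      refine hfin t ht le_rfl (fun r hr => ?_)
      rw [← hgpos]
      exact lt_of_le_of_ne (hgnn (x r)) (Ne.symm (hz r ⟨hr.1, hr.2.le⟩))
  -- reaching the minimum in bounded time, assuming trapped in NPL
  have traj_reach : ∀ (x : ℝ → EuclideanSpace ℝ (Fin n)),
      (∀ t, 0 ≤ t → HasDerivAt x (-(gradient g (x t))) t) →
      (∀ t, 0 ≤ t → x t ∈ NPL) →
      ∃ T, 0 ≤ T ∧ T ≤ g (x 0) / c^2 ∧ f (x T) = fstar := by
    intro x hode trap
    have hc2 : (0:ℝ) < c^2 := by positivity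
    set B : ℝ := g (x 0) / c^2 with hB
    have hB0 : 0 ≤ B := div_nonneg (hgnn _) hc2.le
    refine ⟨B, hB0, le_refl B, ?_⟩
    by_contra hne'
    have hgB : 0 < g (x B) :=
      lt_of_le_of_ne (hgnn _) (fun h => hne' ((hgzero _).1 h.symm))
    have hposall : ∀ r, 0 ≤ r → r ≤ B → fstar < f (x r) := by
      intro r h0 hrB
      rw [← hgpos]
      exact lt_of_lt_of_le hgB (traj_mono x hode r B h0 hrB)
    have hqd : ∀ r, 0 ≤ r → r ≤ B → HasDerivAt (fun s => g (x s) + c^2 * s)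
        (-‖gradient g (x r)‖^2 + c^2 * 1) r := by
      intro r h0 hrB
      exact (traj_deriv x hode r h0 (hposall r h0 hrB)).add ((hasDerivAt_id r).const_mul (c^2))
    have hanti : AntitoneOn (fun s => g (x s) + c^2 * s) (Icc 0 B) := by
      apply antitoneOn_of_deriv_nonpos (f := fun s => g (x s) + c^2 * s) (convex_Icc 0 B)
      · exact (hgcont.comp_continuousOn (hxcont x hode 0 B le_rfl)).add
          (continuousOn_const.mul continuousOn_id)
      · rw [interior_Icc]
        intro r hr
        exact ((hqd r hr.1.le hr.2.le).differentiableAt).differentiableWithinAt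
      · rw [interior_Icc]
        intro r hr
        rw [(hqd r hr.1.le hr.2.le).deriv]
        have hlb : c ≤ ‖gradient g (x r)‖ :=
          hgradlb _ (trap r hr.1.le) (hposall r hr.1.le hr.2.le)
        nlinarith
    have h5 : g (x B) + c^2 * B ≤ g (x 0) + c^2 * 0 :=
      hanti (left_mem_Icc.2 hB0) (right_mem_Icc.2 hB0) hB0
    have h6 : c^2 * B = g (x 0) := by
      rw [hB]; field_simp
    rw [h6] at h5
    linarith
  -- the time-bound constant
  have hc2 : c^2 = β^2 * μ^(2/α) := by
    rw [hcdef, mul_pow, ← Real.rpow_natCast (μ ^ (1/α)) 2, ← Real.rpow_mul hμ.le]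
    have h2 : 1/α * ((2:ℕ):ℝ) = 2/α := by push_cast; ring
    rw [h2]
  have hBeq : ∀ r : ℝ, r * (α/(α-1))^2 * μ^(-(2/α)) = r / c^2 := by
    intro r
    have hμ2 : (0:ℝ) < μ^(2/α) := Real.rpow_pos_of_pos hμ _
    rw [Real.rpow_neg hμ.le, hc2]
    rw [show α/(α-1) = β⁻¹ by rw [hβdef, inv_div]]
    field_simp
  -- final assembly helper
  have assemble : ∀ (x0 : EuclideanSpace ℝ (Fin n)) (x : ℝ → EuclideanSpace ℝ (Fin n)),
      x 0 = x0 → (∀ t, 0 ≤ t → HasDerivAt x (-(gradient g (x t))) t) →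
      (∀ t, 0 ≤ t → x t ∈ NPL) →
      (∀ t : ℝ, 0 ≤ t → x t ∈ NPL) ∧
      ∃ T : ℝ, 0 ≤ T ∧ T ≤ g x0 * (α / (α - 1)) ^ 2 * μ ^ (-(2 / α)) ∧ f (x T) = fstar := by
    intro x0 x hx0 hode trap
    refine ⟨trap, ?_⟩
    obtain ⟨T, hT0, hTb, hTf⟩ := traj_reach x hode trap
    exact ⟨T, hT0, by rw [hBeq, ← hx0]; exact hTb, hTf⟩
  -- main goal
  by_cases huniv : NPLᶜ = ∅
  · -- NPL is everything
    have huniv' : NPL = univ := by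
      rw [← compl_empty_iff.1 huniv]
    refine ⟨univ, isOpen_univ, subset_univ _, by rw [huniv'], ?_⟩
    intro x0 _ x hx0 hode
    exact assemble x0 x hx0 hode (fun t _ => by rw [huniv']; trivial)
  · have hne : NPLᶜ.Nonempty := nonempty_iff_ne_empty.2 huniv
    refine ⟨NPL ∩ {y | g y < c * infDist y NPLᶜ}, ?_, ?_, inter_subset_left, ?_⟩
    · exact hNPLopen.inter (isOpen_lt hgcont (continuous_const.mul (continuous_infDist_pt _)))
    · intro p hp
      refine ⟨hPsub hp, ?_⟩
      have hg0 : g p = 0 := (hgzero p).2 hp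
      have hρ : 0 < infDist p NPLᶜ := by
        rw [← hNPLopen.isClosed_compl.notMem_iff_infDist_pos hne]
        simp only [mem_compl_iff, not_not]
        exact hPsub hp
      show g p < c * infDist p NPLᶜ
      rw [hg0]
      positivity
    · intro x0 hx0mem x hx0 hode
      obtain ⟨hx0NPL, hx0lt⟩ := hx0mem
      have hx0lt' : g (x 0) < c * infDist (x 0) NPLᶜ := by rw [hx0]; exact hx0lt
      have trap2 : ∀ t, 0 ≤ t → ∀ s, s ∈ Icc (0:ℝ) t → x s ∈ NPL := by
        by_contra hconn
        push_neg at hconn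
        obtain ⟨t, ht0, s0, hs0, hs0n⟩ := hconn
        have hKc : IsClosed (Icc 0 t ∩ x ⁻¹' NPLᶜ) :=
          (hxcont x hode 0 t le_rfl).preimage_isClosed_of_isClosed isClosed_Icc
            hNPLopen.isClosed_compl
        have hKne : (Icc 0 t ∩ x ⁻¹' NPLᶜ).Nonempty := ⟨s0, hs0, hs0n⟩
        have hKbdd : BddBelow (Icc 0 t ∩ x ⁻¹' NPLᶜ) := ⟨0, fun r hr => hr.1.1⟩
        have hτK : sInf (Icc 0 t ∩ x ⁻¹' NPLᶜ) ∈ Icc 0 t ∩ x ⁻¹' NPLᶜ :=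
          hKc.csInf_mem hKne hKbdd
        set τ : ℝ := sInf (Icc 0 t ∩ x ⁻¹' NPLᶜ) with hτ
        have hτ0 : 0 ≤ τ := hτK.1.1
        have hτpos : 0 < τ := lt_of_le_of_ne hτ0 (by
          intro h
          exact hτK.2 (show x τ ∈ NPL by rw [← h, hx0]; exact hx0NPL))
        have hbefore : ∀ s, 0 ≤ s → s < τ → x s ∈ NPL := by
          intro s h0s hsτ
          by_contra hn
          exact absurd (csInf_le hKbdd ⟨⟨h0s, hsτ.le.trans hτK.1.2⟩, hn⟩) (not_le.2 hsτ)
        have hdist : ∀ s, 0 ≤ s → s < τ → ‖x s - x 0‖ ≤ g (x 0) / c := by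
          intro s h0s hsτ
          exact traj_dist x hode s h0s
            (fun r hr => hbefore r hr.1 (lt_of_le_of_lt hr.2 hsτ)) s ⟨h0s, le_refl s⟩
        have hlim : ‖x τ - x 0‖ ≤ g (x 0) / c := by
          have hten : Tendsto (fun s => ‖x s - x 0‖) (nhdsWithin τ (Iio τ))
              (nhds ‖x τ - x 0‖) :=
            ((((hode τ hτ0).continuousAt.sub continuousAt_const).norm).tendsto).mono_left
              nhdsWithin_le_nhds
          refine le_of_tendsto hten ?_
          filter_upwards [Ioo_mem_nhdsLT_of_mem (⟨hτpos, le_refl τ⟩ : τ ∈ Ioc 0 τ)] with s hs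
          exact hdist s hs.1.le hs.2
        have hD : infDist (x 0) NPLᶜ ≤ dist (x 0) (x τ) := infDist_le_dist_of_mem hτK.2
        have hD2 : dist (x 0) (x τ) = ‖x τ - x 0‖ := by
          rw [dist_comm, dist_eq_norm]
        have hstrict : g (x 0) / c < infDist (x 0) NPLᶜ :=
          (div_lt_iff₀ hcpos).2 (by rw [mul_comm]; exact hx0lt')
        rw [hD2] at hD
        linarith
      exact assemble x0 x hx0 hode (fun t ht => trap2 t ht t ⟨ht, le_refl t⟩)
end
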